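/- In a finitary extensive category C, for all objects a and b the functor Over a × Over b ⥤ Over (a ⨿ b), sending a pair of objects (f : x ⟶ a, g : y ⟶ b) to the coproduct morphism f ⨿ g : x ⨿ y ⟶ a ⨿ b (and acting likewise on morphisms by coproducts), is an equivalence of categories. -/

import Mathlib

open CategoryTheory CategoryTheory.Limits

/-- The functor `Over a × Over b ⥤ Over (a ⨿ b)` sending a pair of objects
`(f : x ⟶ a, g : y ⟶ b)` to `f ⨿ g : x ⨿ y ⟶ a ⨿ b`, and acting on morphisms
by binary coproducts. -/
@[simps]
noncomputable def coprodOver {C : Type*} [Category C] [HasBinaryCoproducts C] (a b : C) :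
    Over a × Over b ⥤ Over (a ⨿ b) where
  obj X := Over.mk (coprod.map X.1.hom X.2.hom)
  map {X Y} f := Over.homMk (coprod.map f.1.left f.2.left) (by
    dsimp
    rw [coprod.map_map, Over.w f.1, Over.w f.2])
  map_id X := by
    apply Over.OverMorphism.ext
    simp
  map_comp f g := by
    apply Over.OverMorphism.ext
    simp


section Aux
variable {C : Type*} [Category C] [FinitaryExtensive C] {a b : C}

lemma coprodOver_aux_pullback (f : Over a) (g : Over b) :
    IsPullback coprod.inl f.hom (coprod.map f.hom g.hom) coprod.inl ∧
    IsPullback coprod.inr g.hom (coprod.map f.hom g.hom) coprod.inr :=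
  ((BinaryCofan.isVanKampen_iff _).mp
      (FinitaryExtensive.vanKampen _ (coprodIsCoprod a b))
    (BinaryCofan.mk coprod.inl coprod.inr) f.hom g.hom (coprod.map f.hom g.hom)
    (by exact (coprod.inl_map _ _).symm) (by exact (coprod.inr_map _ _).symm)).mp ⟨coprodIsCoprod _ _⟩

end Aux

theorem coprodOver_isEquivalence {C : Type*} [Category C] [FinitaryExtensive C]
    (a b : C) : (coprodOver a b).IsEquivalence := by
  have faithful : (coprodOver a b).Faithful := by
    constructor
    intro X Y u v h
    have h := congrArg CommaMorphism.left h
    dsimp [coprodOver] at h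
    have h1 : u.1.left ≫ (coprod.inl : Y.1.left ⟶ Y.1.left ⨿ Y.2.left) = v.1.left ≫ coprod.inl := by
      simpa using (coprod.inl ≫= h)
    have h2 : u.2.left ≫ (coprod.inr : Y.2.left ⟶ Y.1.left ⨿ Y.2.left) = v.2.left ≫ coprod.inr := by
      simpa using (coprod.inr ≫= h)
    rw [cancel_mono] at h1 h2
    ext
    · exact h1
    · exact h2
  have full : (coprodOver a b).Full := by
    constructor
    intro X Y k
    obtain ⟨hl, hr⟩ := coprodOver_aux_pullback Y.1 Y.2
    have wk : k.left ≫ coprod.map Y.1.hom Y.2.hom = coprod.map X.1.hom X.2.hom := by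
      simpa [coprodOver] using Over.w k
    have cl : (coprod.inl ≫ k.left) ≫ coprod.map Y.1.hom Y.2.hom =
        X.1.hom ≫ (coprod.inl : a ⟶ a ⨿ b) := by
      exact (Category.assoc _ _ _).trans ((coprod.inl ≫= wk).trans (coprod.inl_map _ _))
    have cr : (coprod.inr ≫ k.left) ≫ coprod.map Y.1.hom Y.2.hom =
        X.2.hom ≫ (coprod.inr : b ⟶ a ⨿ b) := by
      exact (Category.assoc _ _ _).trans ((coprod.inr ≫= wk).trans (coprod.inr_map _ _))
    refine ⟨⟨Over.homMk (hl.lift _ _ cl) (hl.lift_snd _ _ cl),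
             Over.homMk (hr.lift _ _ cr) (hr.lift_snd _ _ cr)⟩, ?_⟩
    apply Over.OverMorphism.ext
    dsimp [coprodOver]
    apply coprod.hom_ext
    · refine (coprod.inl_map _ _).trans ?_
      exact hl.lift_fst _ _ cl
    · refine (coprod.inr_map _ _).trans ?_
      exact hr.lift_fst _ _ cr
  have essSurj : (coprodOver a b).EssSurj := by
    constructor
    intro Z
    set X := pullback (coprod.inl : a ⟶ a ⨿ b) Z.hom with hX
    set Y := pullback (coprod.inr : b ⟶ a ⨿ b) Z.hom with hY
    have pbl : IsPullback (pullback.snd coprod.inl Z.hom) (pullback.fst coprod.inl Z.hom)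
        Z.hom (coprod.inl : a ⟶ a ⨿ b) := (IsPullback.of_hasPullback _ _).flip
    have pbr : IsPullback (pullback.snd coprod.inr Z.hom) (pullback.fst coprod.inr Z.hom)
        Z.hom (coprod.inr : b ⟶ a ⨿ b) := (IsPullback.of_hasPullback _ _).flip
    have hiff := (BinaryCofan.isVanKampen_iff
        (BinaryCofan.mk (coprod.inl : a ⟶ a ⨿ b) coprod.inr)).mp
      (FinitaryExtensive.vanKampen _ (coprodIsCoprod a b))
      (BinaryCofan.mk (pullback.snd coprod.inl Z.hom) (pullback.snd coprod.inr Z.hom))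
      (pullback.fst coprod.inl Z.hom) (pullback.fst coprod.inr Z.hom) Z.hom
      (by exact pullback.condition (f := coprod.inl) (g := Z.hom)) (by exact pullback.condition (f := coprod.inr) (g := Z.hom))
    obtain ⟨hc⟩ := hiff.mpr ⟨pbl, pbr⟩
    refine ⟨(Over.mk (pullback.fst coprod.inl Z.hom), Over.mk (pullback.fst coprod.inr Z.hom)),
      ⟨Over.isoMk ((coprodIsCoprod X Y).coconePointUniqueUpToIso hc) ?_⟩⟩
    dsimp [coprodOver]
    apply coprod.hom_ext
    · have hL : (coprod.inl : X ⟶ X ⨿ Y) ≫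
          ((coprodIsCoprod X Y).coconePointUniqueUpToIso hc).hom =
          pullback.snd coprod.inl Z.hom :=
        (coprodIsCoprod X Y).comp_coconePointUniqueUpToIso_hom hc ⟨WalkingPair.left⟩
      refine (Category.assoc _ _ _).symm.trans ((hL =≫ Z.hom).trans ?_)
      exact (pullback.condition (f := coprod.inl) (g := Z.hom)).symm.trans (coprod.inl_map _ _).symm
    · have hR : (coprod.inr : Y ⟶ X ⨿ Y) ≫
          ((coprodIsCoprod X Y).coconePointUniqueUpToIso hc).hom =
          pullback.snd coprod.inr Z.hom :=
        (coprodIsCoprod X Y).comp_coconePointUniqueUpToIso_hom hc ⟨WalkingPair.right⟩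
      refine (Category.assoc _ _ _).symm.trans ((hR =≫ Z.hom).trans ?_)
      exact (pullback.condition (f := coprod.inr) (g := Z.hom)).symm.trans (coprod.inr_map _ _).symm
  exact { }
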